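/- Let $m \geq 2$ and let $P$ be a $2m \times 2$ complex matrix with columns $P_1, P_2$ and entries $p_{ij}$. Assume $p_{2m,1} \neq 0$, $\Delta := p_{2m-1,1} p_{2m,2} - p_{2m-1,2} p_{2m,1} \neq 0$, and $P_1^\top \Omega_{2m} P_2 = 1$. Then there exists an upper unitriangular matrix $u_2 \in \mathrm{Sp}_{2m}$ such that $u_2 P$ has all entries zero except: the $(2,1)$ entry equal to $-p_{2m,1}/\Delta$, the $(2m-1,2)$ entry equal to $-\Delta/p_{2m,1}$, and the last row equal to $(p_{2m,1}, p_{2m,2})$. -/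

import Mathlib

open Matrix

/-- The matrix `Ω_{2n} = [[0, Fₙ], [-Fₙ, 0]]` of the standard symplectic form,
with `Fₙ` the antidiagonal permutation matrix. -/
noncomputable def OmegaMat (n : ℕ) : Matrix (Fin (2 * n)) (Fin (2 * n)) ℂ :=
  fun i j => if (i : ℕ) + (j : ℕ) = 2 * n - 1 then (if (i : ℕ) < n then 1 else -1) else 0

namespace Stmt12Aux

lemma rev_eq_comm {n : ℕ} {i j : Fin n} : i = j.rev ↔ j = i.rev := by
  constructor <;> rintro rfl <;> simp

/-- matrix supported on a single column -/
def colMat {n : ℕ} (j₀ : Fin n) (v : Fin n → ℂ) : Matrix (Fin n) (Fin n) ℂ :=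
  Matrix.of fun i j => if j = j₀ then v i else 0

lemma colMat_mul {n : ℕ} {ι : Type*} (j₀ : Fin n) (v : Fin n → ℂ) (M : Matrix (Fin n) ι ℂ) :
    colMat j₀ v * M = Matrix.of (fun i c => v i * M j₀ c) := by
  ext i c
  simp [colMat, Matrix.mul_apply, ite_mul]

lemma colMat_mul_colMat {n : ℕ} (j₀ j₁ : Fin n) (v w : Fin n → ℂ) :
    colMat j₀ v * colMat j₁ w = colMat j₁ (fun i => v i * w j₀) := by
  rw [colMat_mul]
  ext i j
  simp [colMat, mul_ite]

lemma colMat_apply {n : ℕ} (j₀ : Fin n) (v : Fin n → ℂ) (i j) :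
    colMat j₀ v i j = if j = j₀ then v i else 0 := rfl

lemma colMat_zero {n : ℕ} (j₀ : Fin n) (v : Fin n → ℂ) (h : ∀ i, v i = 0) :
    colMat j₀ v = 0 := by
  ext i j; simp [colMat, h]

/-- the antidiagonal flip matrix -/
def Fm (n : ℕ) : Matrix (Fin n) (Fin n) ℂ :=
  Matrix.of fun i j => if j = i.rev then 1 else 0

lemma Fm_mul_apply {n : ℕ} {ι : Type*} (M : Matrix (Fin n) ι ℂ) (i : Fin n) (c : ι) :
    (Fm n * M) i c = M i.rev c := by
  simp [Fm, Matrix.mul_apply, ite_mul]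

lemma mul_Fm_apply {n : ℕ} {ι : Type*} [Fintype ι] (M : Matrix ι (Fin n) ℂ) (i : ι) (j : Fin n) :
    (M * Fm n) i j = M i j.rev := by
  have h : ∀ k : Fin n, (j = k.rev) = (k = j.rev) := fun k => propext rev_eq_comm
  simp [Fm, Matrix.mul_apply, mul_ite, h]

lemma Fm_transpose {n : ℕ} : (Fm n)ᵀ = Fm n := by
  ext i j
  show (if i = j.rev then (1:ℂ) else 0) = if j = i.rev then 1 else 0
  by_cases h : i = j.rev
  · rw [if_pos h, if_pos (rev_eq_comm.mp h)]
  · rw [if_neg h, if_neg (fun hc => h (rev_eq_comm.mpr hc))]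

lemma Fm_mul_Fm {n : ℕ} : Fm n * Fm n = 1 := by
  ext i j
  rw [Fm_mul_apply]
  show (if j = i.rev.rev then (1:ℂ) else 0) = _
  simp [Matrix.one_apply, eq_comm]

/-- the equivalence splitting `Fin (2*n)` into two halves -/
def esum (n : ℕ) : Fin (2 * n) ≃ (Fin n ⊕ Fin n) where
  toFun i := if h : (i : ℕ) < n then Sum.inl ⟨i, h⟩ else
    Sum.inr ⟨(i : ℕ) - n, by have := i.isLt; omega⟩
  invFun s := Sum.elim (fun j : Fin n => (⟨(j : ℕ), by have := j.isLt; omega⟩ : Fin (2 * n)))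
    (fun j : Fin n => (⟨n + (j : ℕ), by have := j.isLt; omega⟩ : Fin (2 * n))) s
  left_inv i := by
    by_cases h : (i : ℕ) < n
    · simp [h]
    · have := i.isLt
      simp only [dif_neg h, Sum.elim_inr]
      exact Fin.ext (by simp; omega)
  right_inv s := by
    rcases s with j | j
    · simp
    · have := j.isLt
      simp only [Sum.elim_inr, dif_neg (by omega : ¬ (n + (j:ℕ) < n))]
      congr 1
      exact (dif_neg (show ¬ (n + (j:ℕ) < n) by omega)).trans (congrArg Sum.inr
        (Fin.ext (a := (⟨n + (j:ℕ) - n, by omega⟩ : Fin n)) (b := j)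
          (show n + (j:ℕ) - n = j by omega)))

def OmS (n : ℕ) : Matrix (Fin n ⊕ Fin n) (Fin n ⊕ Fin n) ℂ :=
  fromBlocks 0 (Fm n) (-(Fm n)) 0

lemma Omega_eq (n : ℕ) : OmegaMat n = (OmS n).submatrix (esum n) (esum n) := by
  ext i j
  have hi := i.isLt; have hj := j.isLt
  simp only [OmegaMat, OmS, Matrix.submatrix_apply, esum, Equiv.coe_fn_mk]
  by_cases h1 : (i : ℕ) < n <;> by_cases h2 : (j : ℕ) < n <;>
      simp only [dif_pos, dif_neg, h1, h2, not_false_iff, fromBlocks_apply₁₁,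
        fromBlocks_apply₁₂, fromBlocks_apply₂₁, fromBlocks_apply₂₂, Matrix.zero_apply,
        Matrix.neg_apply, Fm, Matrix.of_apply, Fin.ext_iff, Fin.val_rev] <;>
    split_ifs <;> simp_all <;> omega

section BPart
variable (k : ℕ) (pb : Fin (k+2) → Fin 2 → ℂ)

noncomputable def aa : ℂ := pb ⟨k+1, by omega⟩ 0
noncomputable def bb : ℂ := pb ⟨k+1, by omega⟩ 1
noncomputable def Dl : ℂ :=
  pb ⟨k, by omega⟩ 0 * pb ⟨k+1, by omega⟩ 1 - pb ⟨k, by omega⟩ 1 * pb ⟨k+1, by omega⟩ 0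

noncomputable def cc : Fin (k+2) → ℂ := fun i =>
  if (i : ℕ) < k then -((pb i 0 * bb k pb - pb i 1 * aa k pb) / Dl k pb) else 0

noncomputable def dd : Fin (k+2) → ℂ := fun i =>
  if (i : ℕ) < k then
    (pb ⟨k, by omega⟩ 1 * pb i 0 - pb ⟨k, by omega⟩ 0 * pb i 1) / Dl k pb
  else if (i : ℕ) = k then -(pb ⟨k, by omega⟩ 0 / aa k pb) else 0

lemma cc_k : cc k pb ⟨k, by omega⟩ = 0 := by simp [cc]
lemma cc_k1 : cc k pb ⟨k+1, by omega⟩ = 0 := by simp [cc]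
lemma dd_k1 : dd k pb ⟨k+1, by omega⟩ = 0 := by simp [dd]

noncomputable def Bm : Matrix (Fin (k+2)) (Fin (k+2)) ℂ :=
  1 + colMat ⟨k, by omega⟩ (cc k pb) + colMat ⟨k+1, by omega⟩ (dd k pb)

noncomputable def Binv : Matrix (Fin (k+2)) (Fin (k+2)) ℂ :=
  1 - colMat ⟨k, by omega⟩ (cc k pb) - colMat ⟨k+1, by omega⟩ (dd k pb)
  + colMat ⟨k+1, by omega⟩ (fun i => cc k pb i * dd k pb ⟨k, by omega⟩)

lemma Binv_mul_Bm : Binv k pb * Bm k pb = 1 := by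
  unfold Binv Bm
  simp only [mul_add, add_mul, sub_mul, mul_sub, one_mul, mul_one, colMat_mul_colMat]
  rw [colMat_zero _ (fun i => cc k pb i * cc k pb ⟨k, by omega⟩) (by simp [cc_k]),
    colMat_zero _ (fun i => dd k pb i * cc k pb ⟨k+1, by omega⟩) (by simp [cc_k1]),
    colMat_zero _ (fun i => dd k pb i * dd k pb ⟨k+1, by omega⟩) (by simp [dd_k1]),
    colMat_zero _ (fun i => (cc k pb i * dd k pb ⟨k, by omega⟩) * cc k pb ⟨k+1, by omega⟩)
      (by simp [cc_k1]),
    colMat_zero _ (fun i => (cc k pb i * dd k pb ⟨k, by omega⟩) * dd k pb ⟨k+1, by omega⟩)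
      (by simp [dd_k1])]
  abel

lemma Bm_apply (i j : Fin (k+2)) :
    Bm k pb i j = (if i = j then 1 else 0)
      + (if j = ⟨k, by omega⟩ then cc k pb i else 0)
      + (if j = ⟨k+1, by omega⟩ then dd k pb i else 0) := by
  simp [Bm, colMat_apply, Matrix.one_apply]

lemma Binv_apply (i j : Fin (k+2)) :
    Binv k pb i j = (if i = j then 1 else 0)
      - (if j = ⟨k, by omega⟩ then cc k pb i else 0)
      - (if j = ⟨k+1, by omega⟩ then dd k pb i else 0)
      + (if j = ⟨k+1, by omega⟩ then cc k pb i * dd k pb ⟨k, by omega⟩ else 0) := by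
  simp [Binv, colMat_apply, Matrix.one_apply]

lemma cc_big {i : Fin (k+2)} (h : ¬ ((i:ℕ) < k)) : cc k pb i = 0 := by simp [cc, h]
lemma dd_big {i : Fin (k+2)} (h : k < (i:ℕ)) : dd k pb i = 0 := by
  rw [dd, if_neg (by omega), if_neg (by omega)]

lemma Bm_diag (i : Fin (k+2)) : Bm k pb i i = 1 := by
  rw [Bm_apply, if_pos rfl]
  by_cases h2 : i = (⟨k, by omega⟩ : Fin (k+2))
  · subst h2; simp [cc_k, dd]
  · rw [if_neg h2]
    by_cases h1 : i = (⟨k+1, by omega⟩ : Fin (k+2))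
    · subst h1; simp [dd_k1]
    · rw [if_neg h1]; ring

lemma Bm_lower (i j : Fin (k+2)) (h : (j : ℕ) < (i : ℕ)) : Bm k pb i j = 0 := by
  rw [Bm_apply]
  rw [if_neg (by intro hc; subst hc; omega)]
  by_cases h2 : j = (⟨k, by omega⟩ : Fin (k+2))
  · rw [if_pos h2, if_neg (by intro hc; rw [h2] at hc; exact absurd (congrArg Fin.val hc) (by simp))]
    rw [cc_big k pb (by have := congrArg Fin.val h2; simp at this; omega)]; ring
  · rw [if_neg h2]
    by_cases h1 : j = (⟨k+1, by omega⟩ : Fin (k+2))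
    · exfalso; have hv := congrArg Fin.val h1; have hl := i.isLt; simp at hv; omega
    · rw [if_neg h1]; ring

lemma Binv_diag (i : Fin (k+2)) : Binv k pb i i = 1 := by
  rw [Binv_apply, if_pos rfl]
  by_cases h2 : i = (⟨k, by omega⟩ : Fin (k+2))
  · subst h2
    rw [if_pos rfl, cc_k, if_neg (by intro hc; exact absurd (congrArg Fin.val hc) (by simp)),
      if_neg (by intro hc; exact absurd (congrArg Fin.val hc) (by simp))]
    ring
  · rw [if_neg h2]
    by_cases h1 : i = (⟨k+1, by omega⟩ : Fin (k+2))
    · subst h1; rw [if_pos rfl, if_pos rfl, dd_k1, cc_k1]; ring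
    · rw [if_neg h1, if_neg h1]; ring

lemma Binv_lower (i j : Fin (k+2)) (h : (j : ℕ) < (i : ℕ)) : Binv k pb i j = 0 := by
  rw [Binv_apply]
  rw [if_neg (by intro hc; subst hc; omega)]
  by_cases h2 : j = (⟨k, by omega⟩ : Fin (k+2))
  · rw [if_pos h2, if_neg (by intro hc; rw [h2] at hc; exact absurd (congrArg Fin.val hc) (by simp)),
      if_neg (by intro hc; rw [h2] at hc; exact absurd (congrArg Fin.val hc) (by simp))]
    rw [cc_big k pb (by have := congrArg Fin.val h2; simp at this; omega)]; ring
  · rw [if_neg h2]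
    by_cases h1 : j = (⟨k+1, by omega⟩ : Fin (k+2))
    · exfalso; have hv := congrArg Fin.val h1; have hl := i.isLt; simp at hv; omega
    · rw [if_neg h1, if_neg h1]; ring

end BPart
section APart
variable (k : ℕ) (pb : Fin (k+2) → Fin 2 → ℂ)

noncomputable def Am : Matrix (Fin (k+2)) (Fin (k+2)) ℂ :=
  Matrix.of fun i j => Binv k pb j.rev i.rev

lemma Am_eq : Am k pb = Fm (k+2) * (Binv k pb)ᵀ * Fm (k+2) := by
  ext i j
  rw [mul_Fm_apply, Fm_mul_apply]
  rfl

lemma Am_diag (i : Fin (k+2)) : Am k pb i i = 1 := Binv_diag k pb i.rev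

lemma Am_lower (i j : Fin (k+2)) (h : (j : ℕ) < (i : ℕ)) : Am k pb i j = 0 := by
  refine Binv_lower k pb j.rev i.rev ?_
  rw [Fin.val_rev, Fin.val_rev]
  have := i.isLt; have := j.isLt
  omega

lemma hAFB : (Am k pb)ᵀ * Fm (k+2) * Bm k pb = Fm (k+2) := by
  rw [Am_eq, transpose_mul, transpose_mul, Fm_transpose, transpose_transpose]
  simp only [Matrix.mul_assoc]
  rw [← Matrix.mul_assoc (Fm (k+2)) (Fm (k+2)) (Bm k pb), Fm_mul_Fm, Matrix.one_mul,
    Binv_mul_Bm, Matrix.mul_one]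

noncomputable def Qb : Matrix (Fin (k+2)) (Fin 2) ℂ := Matrix.of fun i c =>
  (if (i : ℕ) = k+1 then pb ⟨k+1, by omega⟩ c else 0) +
  (if (i : ℕ) = k ∧ c = 1 then -(Dl k pb / aa k pb) else 0)

lemma Bm_mul_pb (ha : aa k pb ≠ 0) (hD : Dl k pb ≠ 0) :
    Bm k pb * Matrix.of pb = Qb k pb := by
  unfold Bm
  rw [Matrix.add_mul, Matrix.add_mul, Matrix.one_mul, colMat_mul, colMat_mul]
  ext i c
  obtain ⟨iv, hiv⟩ := i
  simp only [Matrix.add_apply, Matrix.of_apply, Qb]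
  show pb ⟨iv, hiv⟩ c + cc k pb ⟨iv, hiv⟩ * pb ⟨k, by omega⟩ c
      + dd k pb ⟨iv, hiv⟩ * pb ⟨k+1, by omega⟩ c
    = (if iv = k+1 then pb ⟨k+1, by omega⟩ c else 0)
      + (if iv = k ∧ c = 1 then -(Dl k pb / aa k pb) else 0)
  rcases Nat.lt_trichotomy iv k with h | h | h
  · rw [cc, dd]
    show pb ⟨iv, hiv⟩ c + (if iv < k then _ else _) * _ + (if iv < k then _ else _) * _ = _
    rw [if_pos h, if_pos h, if_neg (by omega), if_neg (by rintro ⟨h1, -⟩; omega)]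
    unfold aa bb Dl at *
    fin_cases c <;> (simp only [Fin.zero_eta, Fin.mk_one]; grind)
  · subst h
    rw [cc_k, dd]
    show pb _ c + 0 * _ + (if iv < iv then _ else if iv = iv then _ else _) * _ = _
    rw [if_neg (by omega), if_pos rfl, if_neg (by omega)]
    unfold aa Dl at *
    fin_cases c <;> simp only [Fin.zero_eta, Fin.mk_one]
    · rw [if_neg (by rintro ⟨-, hc⟩; exact absurd hc (by decide))]
      field_simp
      ring
    · rw [if_pos ⟨trivial, trivial⟩]
      field_simp
      ring
  · have h1 : iv = k + 1 := by omega
    subst h1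
    rw [cc_k1, dd_k1, if_pos rfl, if_neg (by rintro ⟨hc, -⟩; omega)]
    ring

lemma sum_natcond {n : ℕ} (v : Fin n → ℂ) (x : ℕ) (j₀ : Fin n) (hj : (j₀ : ℕ) = x) :
    (∑ j : Fin n, if (j : ℕ) = x then v j else 0) = v j₀ := by
  rw [Finset.sum_eq_single j₀]
  · rw [if_pos hj]
  · intro b _ hb
    rw [if_neg (fun hc => hb (Fin.ext (by omega)))]
  · intro h; exact absurd (Finset.mem_univ _) h

variable (pt : Fin (k+2) → Fin 2 → ℂ)

noncomputable def alM : Matrix (Fin (k+2)) (Fin 2) ℂ := Am k pb * Matrix.of pt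

noncomputable def ss : Fin (k+2) → ℂ := fun i =>
  ((if (i : ℕ) = 1 then -(aa k pb / Dl k pb) else 0) - alM k pb pt i 0) / aa k pb

noncomputable def tt : Fin (k+2) → ℂ := fun i =>
  aa k pb / Dl k pb * (bb k pb * ss k pb pt i + alM k pb pt i 1)

noncomputable def Cm : Matrix (Fin (k+2)) (Fin (k+2)) ℂ := Matrix.of fun i j =>
  if (j : ℕ) = k+1 then ss k pb pt i
  else if (j : ℕ) = k then tt k pb pt i
  else if (i : ℕ) = 0 then ss k pb pt j.rev
  else if (i : ℕ) = 1 then tt k pb pt j.rev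
  else 0

lemma CQb0 (i : Fin (k+2)) :
    (Cm k pb pt * Qb k pb) i 0 = aa k pb * ss k pb pt i := by
  rw [Matrix.mul_apply]
  have h : ∀ j : Fin (k+2), Cm k pb pt i j * Qb k pb j 0
      = (if (j : ℕ) = k+1 then Cm k pb pt i j * pb ⟨k+1, by omega⟩ 0 else 0) := by
    intro j
    have h0 : ((0 : Fin 2) = 1) = False := by simp [Fin.ext_iff]
    simp only [Qb, Matrix.of_apply, h0, and_false, if_false, add_zero, mul_ite, mul_zero]
  rw [Finset.sum_congr rfl (fun j _ => h j),
    sum_natcond _ (k+1) ⟨k+1, by omega⟩ rfl]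
  have hc : Cm k pb pt i ⟨k+1, by omega⟩ = ss k pb pt i := by simp [Cm]
  rw [hc, mul_comm]
  rfl

lemma CQb1 (i : Fin (k+2)) :
    (Cm k pb pt * Qb k pb) i 1 = bb k pb * ss k pb pt i + -(Dl k pb / aa k pb) * tt k pb pt i := by
  rw [Matrix.mul_apply]
  have h : ∀ j : Fin (k+2), Cm k pb pt i j * Qb k pb j 1
      = (if (j : ℕ) = k+1 then Cm k pb pt i j * pb ⟨k+1, by omega⟩ 1 else 0)
      + (if (j : ℕ) = k then Cm k pb pt i j * -(Dl k pb / aa k pb) else 0) := by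
    intro j
    have h1 : ((1 : Fin 2) = 1) = True := by simp
    simp only [Qb, Matrix.of_apply, h1, and_true, mul_add, mul_ite, mul_zero]
  rw [Finset.sum_congr rfl (fun j _ => h j), Finset.sum_add_distrib,
    sum_natcond _ (k+1) ⟨k+1, by omega⟩ rfl, sum_natcond _ k ⟨k, by omega⟩ rfl]
  have h1 : Cm k pb pt i ⟨k+1, by omega⟩ = ss k pb pt i := by simp [Cm]
  have h2 : Cm k pb pt i ⟨k, by omega⟩ = tt k pb pt i := by simp [Cm]
  rw [h1, h2]
  show ss k pb pt i * bb k pb + tt k pb pt i * -(Dl k pb / aa k pb) = _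
  ring

lemma Cm_symm (hst : ss k pb pt ⟨1, by omega⟩ = tt k pb pt ⟨0, by omega⟩) :
    (Cm k pb pt)ᵀ * Fm (k+2) = Fm (k+2) * Cm k pb pt := by
  ext i j
  rw [mul_Fm_apply, Fm_mul_apply, Matrix.transpose_apply]
  show Cm k pb pt j.rev i = Cm k pb pt i.rev j
  have hi := i.isLt; have hj := j.isLt
  have hri : ((i.rev : Fin (k+2)) : ℕ) = k+1 - (i : ℕ) := by rw [Fin.val_rev]; omega
  have hrj : ((j.rev : Fin (k+2)) : ℕ) = k+1 - (j : ℕ) := by rw [Fin.val_rev]; omega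
  have hir : ∀ (x : ℕ) (hx : x < k+2), (i : ℕ) = k+1-x → i.rev = ⟨x, hx⟩ :=
    fun x hx h => Fin.ext (show (i.rev : ℕ) = x by rw [hri]; omega)
  have hjr : ∀ (x : ℕ) (hx : x < k+2), (j : ℕ) = k+1-x → j.rev = ⟨x, hx⟩ :=
    fun x hx h => Fin.ext (show (j.rev : ℕ) = x by rw [hrj]; omega)
  simp only [Cm, Matrix.of_apply, hri, hrj]
  split_ifs <;> first
    | rfl
    | omega
    | (congr 1; exact Fin.ext (by rw [Fin.val_rev, Fin.val_rev]; omega))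
    | (rw [hjr 1 (by omega) (by omega), hir 0 (by omega) (by omega)]; exact hst)
    | (rw [hjr 0 (by omega) (by omega), hir 1 (by omega) (by omega)]; exact hst.symm)

end APart

lemma blocks_symp {n : ℕ} (A B C : Matrix (Fin n) (Fin n) ℂ)
    (hA : Aᵀ * Fm n * B = Fm n) (hC : Cᵀ * Fm n = Fm n * C) :
    (fromBlocks A (C * B) 0 B)ᵀ * OmS n * fromBlocks A (C * B) 0 B = OmS n := by
  have hA' : Bᵀ * (Fm n * A) = Fm n := by
    have h := congrArg Matrix.transpose hA
    rwa [transpose_mul, transpose_mul, transpose_transpose, Fm_transpose] at h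
  have hCB : (C * B)ᵀ * Fm n * B = Bᵀ * (Fm n * (C * B)) := by
    rw [transpose_mul, Matrix.mul_assoc, Matrix.mul_assoc, ← Matrix.mul_assoc Cᵀ, hC,
      Matrix.mul_assoc]
  rw [OmS, fromBlocks_transpose, fromBlocks_multiply, fromBlocks_multiply, fromBlocks_inj]
  refine ⟨?_, ?_, ?_, ?_⟩ <;>
    simp only [transpose_zero, Matrix.mul_zero, Matrix.zero_mul, add_zero, zero_add,
      Matrix.neg_mul, Matrix.mul_neg, neg_zero, Matrix.mul_assoc]
  · rw [← Matrix.mul_assoc]; exact hA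
  · rw [hA']
  · have h4 : (C * B)ᵀ * (Fm n * B) = Bᵀ * (Fm n * (C * B)) := by
      rw [← Matrix.mul_assoc]; exact hCB
    rw [h4]
    exact neg_add_cancel _
end Stmt12Aux

open Stmt12Aux

/-- Lemma 4 (second matrix): if `P` is a `2m × 2` matrix with `p_{2m,1} ≠ 0`,
`Δ = p_{2m-1,1}p_{2m,2} - p_{2m-1,2}p_{2m,1} ≠ 0` and `P₁ᵀ Ω P₂ = 1`, then some
upper unitriangular symplectic `u₂` takes `P` to the matrix with `(2,1)` entry
`-p_{2m,1}/Δ`, `(2m-1,2)` entry `-Δ/p_{2m,1}`, last row `(p_{2m,1}, p_{2m,2})`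
and zeros elsewhere. -/
theorem stmt_12 (m : ℕ) (hm : 2 ≤ m) (P : Matrix (Fin (2 * m)) (Fin 2) ℂ)
    (hp : P ⟨2 * m - 1, by omega⟩ 0 ≠ 0)
    (hΔ : P ⟨2 * m - 2, by omega⟩ 0 * P ⟨2 * m - 1, by omega⟩ 1 -
        P ⟨2 * m - 2, by omega⟩ 1 * P ⟨2 * m - 1, by omega⟩ 0 ≠ 0)
    (hsymp : (fun i => P i 0) ⬝ᵥ (OmegaMat m).mulVec (fun i => P i 1) = 1) :
    ∃ u : Matrix (Fin (2 * m)) (Fin (2 * m)) ℂ,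
      (∀ i, u i i = 1) ∧
      (∀ i j : Fin (2 * m), (j : ℕ) < (i : ℕ) → u i j = 0) ∧
      uᵀ * OmegaMat m * u = OmegaMat m ∧
      (∀ i : Fin (2 * m),
        (u * P) i 0 =
          if (i : ℕ) = 1 then
            -(P ⟨2 * m - 1, by omega⟩ 0 /
              (P ⟨2 * m - 2, by omega⟩ 0 * P ⟨2 * m - 1, by omega⟩ 1 -
                P ⟨2 * m - 2, by omega⟩ 1 * P ⟨2 * m - 1, by omega⟩ 0))
          else if (i : ℕ) = 2 * m - 1 then P ⟨2 * m - 1, by omega⟩ 0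
          else 0) ∧
      (∀ i : Fin (2 * m),
        (u * P) i 1 =
          if (i : ℕ) = 2 * m - 2 then
            -((P ⟨2 * m - 2, by omega⟩ 0 * P ⟨2 * m - 1, by omega⟩ 1 -
                P ⟨2 * m - 2, by omega⟩ 1 * P ⟨2 * m - 1, by omega⟩ 0) /
              P ⟨2 * m - 1, by omega⟩ 0)
          else if (i : ℕ) = 2 * m - 1 then P ⟨2 * m - 1, by omega⟩ 1
          else 0) := by
  obtain ⟨k, rfl⟩ : ∃ k, m = k + 2 := ⟨m - 2, by omega⟩
  set ptf : Fin (k+2) → Fin 2 → ℂ :=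
    fun i c => P ⟨(i : ℕ), by have := i.isLt; omega⟩ c with hptf
  set pbf : Fin (k+2) → Fin 2 → ℂ :=
    fun i c => P ⟨(k+2) + (i : ℕ), by have := i.isLt; omega⟩ c with hpbf
  have Pmk : ∀ (x y : ℕ) (hx : x < 2*(k+2)) (hy : y < 2*(k+2)), x = y →
      ∀ c : Fin 2, P ⟨x, hx⟩ c = P ⟨y, hy⟩ c := by
    rintro x y hx hy rfl c; rfl
  have ea : aa k pbf = P ⟨2*(k+2)-1, by omega⟩ 0 :=
    Pmk ((k+2)+(k+1)) (2*(k+2)-1) (by omega) (by omega) (by omega) 0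
  have eb : bb k pbf = P ⟨2*(k+2)-1, by omega⟩ 1 :=
    Pmk ((k+2)+(k+1)) (2*(k+2)-1) (by omega) (by omega) (by omega) 1
  have ea' : pbf ⟨k+1, by omega⟩ 0 = P ⟨2*(k+2)-1, by omega⟩ 0 := ea
  have eb' : pbf ⟨k+1, by omega⟩ 1 = P ⟨2*(k+2)-1, by omega⟩ 1 := eb
  have ep0 : pbf ⟨k, by omega⟩ 0 = P ⟨2*(k+2)-2, by omega⟩ 0 :=
    Pmk ((k+2)+k) (2*(k+2)-2) (by omega) (by omega) (by omega) 0
  have ep1 : pbf ⟨k, by omega⟩ 1 = P ⟨2*(k+2)-2, by omega⟩ 1 :=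
    Pmk ((k+2)+k) (2*(k+2)-2) (by omega) (by omega) (by omega) 1
  have eD : Dl k pbf = P ⟨2*(k+2)-2, by omega⟩ 0 * P ⟨2*(k+2)-1, by omega⟩ 1 -
      P ⟨2*(k+2)-2, by omega⟩ 1 * P ⟨2*(k+2)-1, by omega⟩ 0 := by
    unfold Dl
    rw [ep0, ep1, ea', eb']
  have ha : aa k pbf ≠ 0 := by rw [ea]; exact hp
  have hD : Dl k pbf ≠ 0 := by rw [eD]; exact hΔ
  have hBP : Bm k pbf * Matrix.of pbf = Qb k pbf := Bm_mul_pb k pbf ha hD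
  set P' : Matrix (Fin (k+2) ⊕ Fin (k+2)) (Fin 2) ℂ :=
    Matrix.fromRows (Matrix.of ptf) (Matrix.of pbf) with hP'
  have hPsub : P = P'.submatrix (esum (k+2)) id := by
    ext i c
    simp only [Matrix.submatrix_apply, id_eq, esum, Equiv.coe_fn_mk]
    by_cases h : (i : ℕ) < k+2
    · rw [dif_pos h]
      exact congrFun (congrArg P (Fin.ext rfl)) c
    · rw [dif_neg h]
      exact congrFun (congrArg P (Fin.ext (by have := i.isLt; simp; omega))) c
  set U : Matrix (Fin (k+2) ⊕ Fin (k+2)) (Fin (k+2) ⊕ Fin (k+2)) ℂ :=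
    fromBlocks (Am k pbf) (Cm k pbf ptf * Bm k pbf) 0 (Bm k pbf) with hU
  -- the scalar relation coming from the symplectic normalization
  have hsymp' : (Pᵀ * OmegaMat (k+2) * P) 0 1 = 1 := by
    rw [← hsymp]
    simp only [Matrix.mul_apply, Matrix.transpose_apply, dotProduct, Matrix.mulVec]
    rw [Finset.sum_congr rfl fun (j : Fin (2*(k+2))) _ =>
      Finset.sum_mul Finset.univ (fun i => P i 0 * OmegaMat (k+2) i j) (P j 1),
      Finset.sum_comm]
    exact Finset.sum_congr rfl fun i _ => by
      rw [Finset.mul_sum]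
      exact Finset.sum_congr rfl fun j _ => by ring
  have hsymp'' : (P'ᵀ * OmS (k+2) * P') 0 1 = 1 := by
    rw [← hsymp', hPsub, Omega_eq (k+2), transpose_submatrix, submatrix_mul_equiv,
      submatrix_mul_equiv]
    simp
  have hTsym : (fromBlocks (Am k pbf) 0 0 (Bm k pbf))ᵀ * OmS (k+2) *
      fromBlocks (Am k pbf) 0 0 (Bm k pbf) = OmS (k+2) := by
    have h := blocks_symp (Am k pbf) (Bm k pbf) 0 (hAFB k pbf) (by simp)
    rwa [Matrix.zero_mul] at h
  have hTP : fromBlocks (Am k pbf) 0 0 (Bm k pbf) * P' =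
      Matrix.fromRows (alM k pbf ptf) (Qb k pbf) := by
    rw [hP', fromBlocks_mul_fromRows, Matrix.zero_mul, Matrix.zero_mul, add_zero, zero_add, hBP]
    rfl
  have hform : ((Matrix.fromRows (alM k pbf ptf) (Qb k pbf))ᵀ * OmS (k+2) *
      Matrix.fromRows (alM k pbf ptf) (Qb k pbf)) 0 1 = 1 := by
    rw [← hTP, Matrix.transpose_mul, Matrix.mul_assoc (P'ᵀ), Matrix.mul_assoc (P'ᵀ),
      ← Matrix.mul_assoc ((fromBlocks (Am k pbf) 0 0 (Bm k pbf))ᵀ * OmS (k+2)), hTsym,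
      ← Matrix.mul_assoc]
    exact hsymp''
  have hQrev : ∀ i : Fin (k+2), Qb k pbf i.rev 1 =
      (if (i : ℕ) = 0 then bb k pbf else 0) +
      (if (i : ℕ) = 1 then -(Dl k pbf / aa k pbf) else 0) := by
    intro i
    have hi := i.isLt
    simp only [Qb, Matrix.of_apply, and_true]
    by_cases h0 : (i : ℕ) = 0
    · rw [if_pos (by rw [Fin.val_rev]; omega), if_neg (by rw [Fin.val_rev]; omega),
        if_pos h0, if_neg (by omega)]
      rfl
    · by_cases h1 : (i : ℕ) = 1
      · rw [if_neg (by rw [Fin.val_rev]; omega), if_pos (by rw [Fin.val_rev]; omega),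
          if_neg h0, if_pos h1]
      · rw [if_neg (by rw [Fin.val_rev]; omega), if_neg (by rw [Fin.val_rev]; omega),
          if_neg h0, if_neg h1]
  have hkey : bb k pbf * alM k pbf ptf ⟨0, by omega⟩ 0
      - Dl k pbf / aa k pbf * alM k pbf ptf ⟨1, by omega⟩ 0
      - aa k pbf * alM k pbf ptf ⟨0, by omega⟩ 1 = 1 := by
    rw [← hform, Matrix.mul_assoc]
    have hOR : OmS (k+2) * Matrix.fromRows (alM k pbf ptf) (Qb k pbf) =
        Matrix.fromRows (Fm (k+2) * Qb k pbf) (-(Fm (k+2) * alM k pbf ptf)) := by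
      rw [OmS, fromBlocks_mul_fromRows]
      simp [Matrix.neg_mul]
    rw [hOR, Matrix.mul_apply, Fintype.sum_sum_type]
    have e1 : ∀ i : Fin (k+2),
        (Matrix.fromRows (alM k pbf ptf) (Qb k pbf))ᵀ 0 (Sum.inl i) *
          (Matrix.fromRows (Fm (k+2) * Qb k pbf) (-(Fm (k+2) * alM k pbf ptf))) (Sum.inl i) 1
        = (if (i : ℕ) = 0 then alM k pbf ptf i 0 * bb k pbf else 0)
          + (if (i : ℕ) = 1 then alM k pbf ptf i 0 * -(Dl k pbf / aa k pbf) else 0) := by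
      intro i
      show alM k pbf ptf i 0 * (Fm (k+2) * Qb k pbf) i 1 = _
      rw [Fm_mul_apply, hQrev i, mul_add, mul_ite, mul_ite, mul_zero]
    have e2 : ∀ i : Fin (k+2),
        (Matrix.fromRows (alM k pbf ptf) (Qb k pbf))ᵀ 0 (Sum.inr i) *
          (Matrix.fromRows (Fm (k+2) * Qb k pbf) (-(Fm (k+2) * alM k pbf ptf))) (Sum.inr i) 1
        = (if (i : ℕ) = k+1 then pbf ⟨k+1, by omega⟩ 0 * -(alM k pbf ptf i.rev 1) else 0) := by
      intro i
      show Qb k pbf i 0 * (-(Fm (k+2) * alM k pbf ptf)) i 1 = _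
      have hq : Qb k pbf i 0 = if (i : ℕ) = k+1 then pbf ⟨k+1, by omega⟩ 0 else 0 := by
        simp only [Qb, Matrix.of_apply]
        rw [if_neg (show ¬((i : ℕ) = k ∧ (0 : Fin 2) = 1) from
          fun hc => absurd hc.2 (by decide)), add_zero]
      rw [hq, Matrix.neg_apply, Fm_mul_apply, ite_mul, zero_mul]
    rw [Finset.sum_congr rfl fun i _ => e1 i, Finset.sum_congr rfl fun i _ => e2 i,
      Finset.sum_add_distrib, sum_natcond _ 0 ⟨0, by omega⟩ rfl,
      sum_natcond _ 1 ⟨1, by omega⟩ rfl, sum_natcond _ (k+1) ⟨k+1, by omega⟩ rfl]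
    rw [show ((⟨k+1, by omega⟩ : Fin (k+2)).rev) = (⟨0, by omega⟩ : Fin (k+2)) from
      Fin.ext (show ((⟨k+1, by omega⟩ : Fin (k+2)).rev : ℕ) = 0 by
        rw [Fin.val_rev]; simp only [Fin.val_mk]; omega)]
    show _ = alM k pbf ptf ⟨0, _⟩ 0 * bb k pbf + alM k pbf ptf ⟨1, _⟩ 0 * -(Dl k pbf / aa k pbf)
      + aa k pbf * -(alM k pbf ptf ⟨0, _⟩ 1)
    ring
  have hst : ss k pbf ptf ⟨1, by omega⟩ = tt k pbf ptf ⟨0, by omega⟩ := by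
    unfold tt
    unfold ss
    rw [if_pos (show ((⟨1, by omega⟩ : Fin (k+2)) : ℕ) = 1 from rfl),
      if_neg (show ¬(((⟨0, by omega⟩ : Fin (k+2)) : ℕ) = 1) from fun h => Nat.zero_ne_one h)]
    simp only [Fin.mk_zero, Fin.mk_one] at hkey ⊢
    field_simp at hkey ⊢
    linear_combination hkey
  refine ⟨U.submatrix (esum (k+2)) (esum (k+2)), ?_, ?_, ?_, ?_, ?_⟩
  · -- diagonal
    intro i
    rw [Matrix.submatrix_apply]
    simp only [esum, Equiv.coe_fn_mk]
    by_cases h : (i : ℕ) < k+2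
    · rw [dif_pos h]
      exact Am_diag k pbf _
    · rw [dif_neg h]
      exact Bm_diag k pbf _
  · -- lower triangular zero
    intro i j hji
    rw [Matrix.submatrix_apply]
    simp only [esum, Equiv.coe_fn_mk]
    by_cases h1 : (i : ℕ) < k+2 <;> by_cases h2 : (j : ℕ) < k+2
    · rw [dif_pos h1, dif_pos h2]
      exact Am_lower k pbf _ _ hji
    · omega
    · rw [dif_neg h1, dif_pos h2]
      rfl
    · rw [dif_neg h1, dif_neg h2]
      exact Bm_lower k pbf _ _ (show (j:ℕ)-(k+2) < (i:ℕ)-(k+2) by omega)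
  · -- symplectic
    have hCsym := Cm_symm k pbf ptf hst
    have hUsym := blocks_symp (Am k pbf) (Bm k pbf) (Cm k pbf ptf) (hAFB k pbf) hCsym
    rw [Omega_eq (k+2), transpose_submatrix, submatrix_mul_equiv, submatrix_mul_equiv, hUsym]
  case refine_4 =>
    have hUP : U.submatrix (esum (k+2)) (esum (k+2)) * P
        = (U * P').submatrix (esum (k+2)) id := by
      rw [hPsub, submatrix_mul_equiv]
    have hUPb : U * P' = Matrix.fromRows (alM k pbf ptf + Cm k pbf ptf * Qb k pbf) (Qb k pbf) := by
      rw [hU, hP', fromBlocks_mul_fromRows, Matrix.zero_mul, zero_add,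
        Matrix.mul_assoc, hBP]
      rfl
    intro i
    have hi := i.isLt
    rw [hUP, hUPb, Matrix.submatrix_apply, id_eq]
    simp only [esum, Equiv.coe_fn_mk]
    by_cases h : (i : ℕ) < k+2
    case pos =>
      rw [dif_pos h]
      show (alM k pbf ptf + Cm k pbf ptf * Qb k pbf) ⟨(i:ℕ), h⟩ 0 = _
      rw [Matrix.add_apply, CQb0]
      have hval : alM k pbf ptf ⟨(i:ℕ), h⟩ 0 + aa k pbf * ss k pbf ptf ⟨(i:ℕ), h⟩
          = (if (i : ℕ) = 1 then -(aa k pbf / Dl k pbf) else 0) := by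
        unfold ss
        simp only [Fin.val_mk]
        rw [mul_comm (aa k pbf), div_mul_cancel₀ _ ha]
        ring
      rw [hval]
      by_cases h1 : (i : ℕ) = 1
      · rw [if_pos h1, if_pos h1, ea, eD]
      · rw [if_neg h1, if_neg h1, if_neg (by omega)]
    case neg =>
      rw [dif_neg h]
      show ((if (i:ℕ)-(k+2) = k+1 then pbf ⟨k+1, by omega⟩ (0 : Fin 2) else 0)
          + (if (i:ℕ)-(k+2) = k ∧ (0 : Fin 2) = (1 : Fin 2) then
              -(Dl k pbf / aa k pbf) else 0)) = _
      rw [if_neg (show ¬((i:ℕ)-(k+2) = k ∧ (0 : Fin 2) = 1) from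
        fun hc => absurd hc.2 (by decide)), add_zero]
      by_cases h1 : (i : ℕ) = 2*(k+2)-1
      · rw [if_pos (by omega), if_neg (by omega), if_pos h1]
        exact Pmk ((k+2)+(k+1)) (2*(k+2)-1) (by omega) (by omega) (by omega) 0
      · rw [if_neg (by omega), if_neg (by omega), if_neg h1]
  case refine_5 =>
    have hUP : U.submatrix (esum (k+2)) (esum (k+2)) * P
        = (U * P').submatrix (esum (k+2)) id := by
      rw [hPsub, submatrix_mul_equiv]
    have hUPb : U * P' = Matrix.fromRows (alM k pbf ptf + Cm k pbf ptf * Qb k pbf) (Qb k pbf) := by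
      rw [hU, hP', fromBlocks_mul_fromRows, Matrix.zero_mul, zero_add,
        Matrix.mul_assoc, hBP]
      rfl
    intro i
    have hi := i.isLt
    rw [hUP, hUPb, Matrix.submatrix_apply, id_eq]
    simp only [esum, Equiv.coe_fn_mk]
    by_cases h : (i : ℕ) < k+2
    case pos =>
      rw [dif_pos h]
      show (alM k pbf ptf + Cm k pbf ptf * Qb k pbf) ⟨(i:ℕ), h⟩ 1 = _
      rw [Matrix.add_apply, CQb1]
      have hval : alM k pbf ptf ⟨(i:ℕ), h⟩ 1 + (bb k pbf * ss k pbf ptf ⟨(i:ℕ), h⟩ +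
          -(Dl k pbf / aa k pbf) * tt k pbf ptf ⟨(i:ℕ), h⟩) = 0 := by
        unfold tt
        field_simp
        ring
      rw [hval, if_neg (by omega), if_neg (by omega)]
    case neg =>
      rw [dif_neg h]
      show ((if (i:ℕ)-(k+2) = k+1 then pbf ⟨k+1, by omega⟩ (1 : Fin 2) else 0)
          + (if (i:ℕ)-(k+2) = k ∧ (1 : Fin 2) = (1 : Fin 2) then
              -(Dl k pbf / aa k pbf) else 0)) = _
      by_cases h1 : (i : ℕ) = 2*(k+2)-1
      · rw [if_pos (show (i:ℕ)-(k+2) = k+1 by omega),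
          if_neg (show ¬((i:ℕ)-(k+2) = k ∧ (1 : Fin 2) = (1 : Fin 2)) from
            fun hc => by omega), add_zero, if_neg (by omega), if_pos h1]
        exact Pmk ((k+2)+(k+1)) (2*(k+2)-1) (by omega) (by omega) (by omega) 1
      · by_cases h2 : (i : ℕ) = 2*(k+2)-2
        · rw [if_neg (show ¬((i:ℕ)-(k+2) = k+1) by omega), if_pos ⟨by omega, rfl⟩,
            zero_add, if_pos h2, eD, ea]
        · rw [if_neg (show ¬((i:ℕ)-(k+2) = k+1) by omega),
            if_neg (show ¬((i:ℕ)-(k+2) = k ∧ (1 : Fin 2) = (1 : Fin 2)) from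
              fun hc => by omega), add_zero, if_neg h2, if_neg h1]
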